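/- Let k be a commutative unital ring, A a unital k-algebra, and qA = (A[[λ]], ⋆) a formal deformation of A. Let P_0, Q_0 ∈ M_n(A) be idempotents and let P = Σ_{r≥0} P_r λ^r, Q = Σ_{r≥0} Q_r λ^r ∈ M_n(A)[[λ]] be ⋆-idempotents (P ⋆ P = P, Q ⋆ Q = Q) deforming P_0 and Q_0 (i.e. with zeroth coefficients P_0 and Q_0). Then the map I, defined on the k[[λ]]-submodule (P_0 M_n(A) Q_0)[[λ]] of M_n(A)[[λ]] consisting of series all of whose coefficients lie in P_0 M_n(A) Q_0, by I(B) = P ⋆ B ⋆ Q, is a k[[λ]]-module isomorphism onto the k[[λ]]-submodule P ⋆ M_n(A)[[λ]] ⋆ Q = { P ⋆ L ⋆ Q : L ∈ M_n(A)[[λ]] } of M_n(A)[[λ]]. -/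

import Mathlib

open scoped Matrix

/-- Cauchy-type convolution of two formal series along a family of
coefficient maps `B r : M → N → P`:  `(x ⋆ y) n = ∑_{r+i+j=n} B r (x i) (y j)`. -/
def fdConv {M N P : Type*} [AddCommMonoid P] (B : ℕ → M → N → P)
    (x : ℕ → M) (y : ℕ → N) : ℕ → P := fun n =>
  ∑ p ∈ Finset.HasAntidiagonal.antidiagonal n, ∑ q ∈ Finset.HasAntidiagonal.antidiagonal p.2, B p.1 (x q.1) (y q.2)

/-- The unit formal series `1 + 0·λ + 0·λ² + ⋯`. -/
def fdOne (A : Type*) [One A] [Zero A] : ℕ → A := fun n => if n = 0 then 1 else 0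

/-- An element viewed as a constant (order-zero) formal series. -/
def fdC {A : Type*} [Zero A] (a : A) : ℕ → A := fun n => if n = 0 then a else 0

/-- Coefficientwise star of a formal series. -/
def fdStar {A : Type*} [Star A] (x : ℕ → A) : ℕ → A := fun n => star (x n)

/-- Action of a scalar series `c ∈ k[[λ]]` on series with coefficients in a `k`-module. -/
def fdSmul {k M : Type*} [Semiring k] [AddCommMonoid M] [Module k M]
    (c : ℕ → k) (x : ℕ → M) : ℕ → M := fun n =>
  ∑ p ∈ Finset.HasAntidiagonal.antidiagonal n, c p.1 • x p.2

/-- Order-by-order extension of a family of maps `T r : E → F` to formal series: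
`(T x) n = ∑_{r+j=n} T r (x j)`. -/
def fdMap {E F : Type*} [AddCommMonoid F] (T : ℕ → E → F) (x : ℕ → E) : ℕ → F :=
  fun n => ∑ p ∈ Finset.HasAntidiagonal.antidiagonal n, T p.1 (x p.2)

/-- A formal deformation (à la Gerstenhaber) of a unital `k`-algebra `A`:
a family of `k`-bilinear cochains `C r` with `C 0` the original product, whose
convolution product on `A[[λ]]` is associative and unital (with the same unit). -/
structure FormalDeformation (k A : Type*) [CommRing k] [Ring A] [Algebra k A] where
  C : ℕ → A →ₗ[k] A →ₗ[k] A
  C_zero : ∀ a b : A, C 0 a b = a * b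
  assoc : ∀ x y z : ℕ → A,
    fdConv (fun r a b => C r a b) (fdConv (fun r a b => C r a b) x y) z =
      fdConv (fun r a b => C r a b) x (fdConv (fun r a b => C r a b) y z)
  one_mul : ∀ x : ℕ → A, fdConv (fun r a b => C r a b) (fdOne A) x = x
  mul_one : ∀ x : ℕ → A, fdConv (fun r a b => C r a b) x (fdOne A) = x

namespace FormalDeformation

variable {k A : Type*} [CommRing k] [Ring A] [Algebra k A]

/-- The deformed product on `A[[λ]]`. -/
def mul (D : FormalDeformation k A) : (ℕ → A) → (ℕ → A) → ℕ → A :=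
  fdConv fun r a b => D.C r a b

/-- A deformation of a `*`-algebra is Hermitian if the coefficientwise extension of
the involution is still an involution for the deformed product. -/
def IsHermitian [StarRing A] (D : FormalDeformation k A) : Prop :=
  ∀ x y : ℕ → A, fdStar (D.mul x y) = D.mul (fdStar y) (fdStar x)

/-- The extension of the deformation cochains to matrices. -/
def matC (D : FormalDeformation k A) (n : ℕ) (r : ℕ)
    (L S : Matrix (Fin n) (Fin n) A) : Matrix (Fin n) (Fin n) A :=
  Matrix.of fun i j => ∑ s, D.C r (L i s) (S s j)

/-- The deformed product on `M_n(A)[[λ]] = M_n(A[[λ]])`. -/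
def matMul (D : FormalDeformation k A) (n : ℕ) :
    (ℕ → Matrix (Fin n) (Fin n) A) → (ℕ → Matrix (Fin n) (Fin n) A) →
      ℕ → Matrix (Fin n) (Fin n) A :=
  fdConv (D.matC n)

/-- The deformed left action of `M_n(A)[[λ]]` on column vectors `A^n[[λ]]`. -/
def mvMul (D : FormalDeformation k A) (n : ℕ) :
    (ℕ → Matrix (Fin n) (Fin n) A) → (ℕ → Fin n → A) → ℕ → Fin n → A :=
  fdConv fun r L v => fun i => ∑ j, D.C r (L i j) (v j)

/-- The deformed right action of `A[[λ]]` on column vectors `A^n[[λ]]`. -/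
def vsMul (D : FormalDeformation k A) (n : ℕ) :
    (ℕ → Fin n → A) → (ℕ → A) → ℕ → Fin n → A :=
  fdConv fun r v a => fun i => D.C r (v i) a

end FormalDeformation

open Finset

lemma quad1 {M : Type*} [AddCommMonoid M] (n : ℕ) (f : ℕ → ℕ → ℕ → ℕ → M) :
    (∑ p ∈ antidiagonal n, ∑ q ∈ antidiagonal p.2, ∑ u ∈ antidiagonal q.2,
      f p.1 q.1 u.1 u.2)
  = ∑ v ∈ antidiagonal n, ∑ p ∈ antidiagonal v.2, ∑ q ∈ antidiagonal p.2,
      f p.1 q.1 v.1 q.2 := by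
  simp only [Finset.sum_sigma']
  refine Finset.sum_nbij'
    (fun w => ⟨(w.2.2.1, w.1.1 + (w.2.1.1 + w.2.2.2)), (w.1.1, w.2.1.1 + w.2.2.2), (w.2.1.1, w.2.2.2)⟩)
    (fun w => ⟨(w.2.1.1, w.2.2.1 + (w.1.1 + w.2.2.2)), (w.2.2.1, w.1.1 + w.2.2.2), (w.1.1, w.2.2.2)⟩)
    ?_ ?_ ?_ ?_ ?_ <;>
  · rintro ⟨⟨a, b⟩, ⟨c, d⟩, ⟨e, g⟩⟩ hw
    simp only [Finset.mem_sigma, Finset.HasAntidiagonal.mem_antidiagonal] at hw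
    obtain ⟨h1, h2, h3⟩ := hw
    simp only [Finset.mem_sigma, Finset.HasAntidiagonal.mem_antidiagonal, Sigma.mk.inj_iff, Prod.mk.injEq,
      heq_eq_eq, and_true, true_and]
    try first
    | omega
    | (constructor <;> omega)
    | (congr 1 <;> omega)

lemma quad2 {M : Type*} [AddCommMonoid M] (n : ℕ) (f : ℕ → ℕ → ℕ → ℕ → M) :
    (∑ p ∈ antidiagonal n, ∑ q ∈ antidiagonal p.2, ∑ u ∈ antidiagonal q.1,
      f p.1 u.1 u.2 q.2)
  = ∑ v ∈ antidiagonal n, ∑ p ∈ antidiagonal v.2, ∑ q ∈ antidiagonal p.2,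
      f p.1 v.1 q.1 q.2 := by
  simp only [Finset.sum_sigma']
  refine Finset.sum_nbij'
    (fun w => ⟨(w.2.2.1, w.1.1 + (w.2.2.2 + w.2.1.2)), (w.1.1, w.2.2.2 + w.2.1.2), (w.2.2.2, w.2.1.2)⟩)
    (fun w => ⟨(w.2.1.1, (w.1.1 + w.2.2.1) + w.2.2.2), (w.1.1 + w.2.2.1, w.2.2.2), (w.1.1, w.2.2.1)⟩)
    ?_ ?_ ?_ ?_ ?_ <;>
  · rintro ⟨⟨a, b⟩, ⟨c, d⟩, ⟨e, g⟩⟩ hw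
    simp only [Finset.mem_sigma, Finset.HasAntidiagonal.mem_antidiagonal] at hw
    obtain ⟨h1, h2, h3⟩ := hw
    simp only [Finset.mem_sigma, Finset.HasAntidiagonal.mem_antidiagonal, Sigma.mk.inj_iff, Prod.mk.injEq,
      heq_eq_eq, and_true, true_and]
    try first
    | omega
    | (constructor <;> omega)
    | (congr 1 <;> omega)


namespace FormalDeformation

open Finset

variable {k A : Type*} [CommRing k] [Ring A] [Algebra k A]

section MatLemmas

variable (D : FormalDeformation k A) (n : ℕ)

lemma matC_apply (r : ℕ) (L S : Matrix (Fin n) (Fin n) A) (i j : Fin n) :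
    D.matC n r L S i j = ∑ s, D.C r (L i s) (S s j) := rfl

lemma matC_zero_right (r : ℕ) (L : Matrix (Fin n) (Fin n) A) :
    D.matC n r L 0 = 0 := by
  ext i j
  simp [matC_apply]

lemma matC_zero_left (r : ℕ) (S : Matrix (Fin n) (Fin n) A) :
    D.matC n r 0 S = 0 := by
  ext i j
  simp [matC_apply]

lemma matC_add_right (r : ℕ) (L S T : Matrix (Fin n) (Fin n) A) :
    D.matC n r L (S + T) = D.matC n r L S + D.matC n r L T := by
  ext i j
  simp [matC_apply, Finset.sum_add_distrib]

lemma matC_add_left (r : ℕ) (L S T : Matrix (Fin n) (Fin n) A) :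
    D.matC n r (L + S) T = D.matC n r L T + D.matC n r S T := by
  ext i j
  simp [matC_apply, Finset.sum_add_distrib]

lemma matC_sub_right (r : ℕ) (L S T : Matrix (Fin n) (Fin n) A) :
    D.matC n r L (S - T) = D.matC n r L S - D.matC n r L T := by
  ext i j
  simp [matC_apply, Finset.sum_sub_distrib]

lemma matC_sub_left (r : ℕ) (L S T : Matrix (Fin n) (Fin n) A) :
    D.matC n r (L - S) T = D.matC n r L T - D.matC n r S T := by
  ext i j
  simp [matC_apply, Finset.sum_sub_distrib]

lemma matC_smul_right (r : ℕ) (c : k) (L S : Matrix (Fin n) (Fin n) A) :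
    D.matC n r L (c • S) = c • D.matC n r L S := by
  ext i j
  simp [matC_apply, Finset.smul_sum]

lemma matC_smul_left (r : ℕ) (c : k) (L S : Matrix (Fin n) (Fin n) A) :
    D.matC n r (c • L) S = c • D.matC n r L S := by
  ext i j
  simp [matC_apply, Finset.smul_sum]

lemma matC_sum_right {ι : Type*} (r : ℕ) (L : Matrix (Fin n) (Fin n) A)
    (F : Finset ι) (g : ι → Matrix (Fin n) (Fin n) A) :
    D.matC n r L (∑ u ∈ F, g u) = ∑ u ∈ F, D.matC n r L (g u) := by
  ext i j
  simp only [matC_apply, Matrix.sum_apply, map_sum]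
  rw [Finset.sum_comm]

lemma matC_sum_left {ι : Type*} (r : ℕ) (S : Matrix (Fin n) (Fin n) A)
    (F : Finset ι) (g : ι → Matrix (Fin n) (Fin n) A) :
    D.matC n r (∑ u ∈ F, g u) S = ∑ u ∈ F, D.matC n r (g u) S := by
  ext i j
  simp only [matC_apply, Matrix.sum_apply, map_sum, LinearMap.sum_apply]
  rw [Finset.sum_comm]

lemma matC_zero_eq (L S : Matrix (Fin n) (Fin n) A) :
    D.matC n 0 L S = L * S := by
  ext i j
  simp [matC_apply, D.C_zero, Matrix.mul_apply]

lemma matMul_apply (X Y : ℕ → Matrix (Fin n) (Fin n) A) (m : ℕ) :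
    D.matMul n X Y m =
      ∑ p ∈ antidiagonal m, ∑ q ∈ antidiagonal p.2, D.matC n p.1 (X q.1) (Y q.2) := rfl

lemma matMul_add_right (X Y Z : ℕ → Matrix (Fin n) (Fin n) A) :
    D.matMul n X (Y + Z) = D.matMul n X Y + D.matMul n X Z := by
  funext m
  simp [matMul_apply, Pi.add_apply, matC_add_right, Finset.sum_add_distrib]

lemma matMul_add_left (X Y Z : ℕ → Matrix (Fin n) (Fin n) A) :
    D.matMul n (X + Y) Z = D.matMul n X Z + D.matMul n Y Z := by
  funext m
  simp [matMul_apply, Pi.add_apply, matC_add_left, Finset.sum_add_distrib]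

lemma matMul_sub_right (X Y Z : ℕ → Matrix (Fin n) (Fin n) A) :
    D.matMul n X (Y - Z) = D.matMul n X Y - D.matMul n X Z := by
  funext m
  simp [matMul_apply, Pi.sub_apply, matC_sub_right, Finset.sum_sub_distrib]

lemma matMul_sub_left (X Y Z : ℕ → Matrix (Fin n) (Fin n) A) :
    D.matMul n (X - Y) Z = D.matMul n X Z - D.matMul n Y Z := by
  funext m
  simp [matMul_apply, Pi.sub_apply, matC_sub_left, Finset.sum_sub_distrib]

lemma matMul_smul_right (c : ℕ → k) (X Y : ℕ → Matrix (Fin n) (Fin n) A) :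
    D.matMul n X (fdSmul c Y) = fdSmul c (D.matMul n X Y) := by
  funext m
  simp only [matMul_apply, fdSmul, matC_sum_right, matC_smul_right, Finset.smul_sum]
  exact quad1 m fun r i s t => c s • D.matC n r (X i) (Y t)

lemma matMul_smul_left (c : ℕ → k) (X Y : ℕ → Matrix (Fin n) (Fin n) A) :
    D.matMul n (fdSmul c X) Y = fdSmul c (D.matMul n X Y) := by
  funext m
  simp only [matMul_apply, fdSmul, matC_sum_left, matC_smul_left, Finset.smul_sum]
  exact quad2 m fun r s i j => c s • D.matC n r (X i) (Y j)

end MatLemmas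

end FormalDeformation

noncomputable def seqFix {M : Type*} [Zero M] (G : (ℕ → M) → ℕ → M) : ℕ → M
  | N => G (fun j => if h : j < N then seqFix G j else 0) N
termination_by N => N
decreasing_by exact h

lemma seqFix_spec {M : Type*} [Zero M] (G : (ℕ → M) → ℕ → M)
    (hG : ∀ X Y N, (∀ j, j < N → X j = Y j) → G X N = G Y N) (N : ℕ) :
    seqFix G N = G (seqFix G) N := by
  rw [seqFix]
  exact hG _ _ N fun j hj => by rw [dif_pos hj]

lemma corner_idem {R : Type*} [Ring R] {P₀ Q₀ : R} (hP₀ : P₀ * P₀ = P₀)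
    (hQ₀ : Q₀ * Q₀ = Q₀) (W : R) : P₀ * (P₀ * W * Q₀) * Q₀ = P₀ * W * Q₀ := by
  rw [show P₀ * (P₀ * W * Q₀) * Q₀ = P₀ * P₀ * W * (Q₀ * Q₀) by noncomm_ring, hP₀, hQ₀]

namespace FormalDeformation

variable {k A : Type*} [CommRing k] [Ring A] [Algebra k A]

section MatLemmas2

variable (D : FormalDeformation k A) (n : ℕ)

lemma mul_apply (x y : ℕ → A) (m : ℕ) :
    D.mul x y m =
      ∑ p ∈ antidiagonal m, ∑ q ∈ antidiagonal p.2, D.C p.1 (x q.1) (y q.2) := rfl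

lemma matMul_entry (X Y : ℕ → Matrix (Fin n) (Fin n) A) (m : ℕ) (i j : Fin n) :
    D.matMul n X Y m i j =
      ∑ s, D.mul (fun t => X t i s) (fun t => Y t s j) m := by
  simp only [matMul_apply, mul_apply, Matrix.sum_apply, matC_apply]
  trans ∑ p ∈ antidiagonal m, ∑ s, ∑ q ∈ antidiagonal p.2, D.C p.1 (X q.1 i s) (Y q.2 s j)
  · exact Finset.sum_congr rfl fun p _ => Finset.sum_comm
  · exact Finset.sum_comm

lemma mul_sum_left {ι : Type*} (F : Finset ι) (g : ι → ℕ → A) (y : ℕ → A) (m : ℕ) :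
    D.mul (fun t => ∑ s ∈ F, g s t) y m = ∑ s ∈ F, D.mul (g s) y m := by
  simp only [mul_apply, map_sum, LinearMap.sum_apply]
  trans ∑ p ∈ antidiagonal m, ∑ s ∈ F, ∑ q ∈ antidiagonal p.2, D.C p.1 (g s q.1) (y q.2)
  · exact Finset.sum_congr rfl fun p _ => Finset.sum_comm
  · exact Finset.sum_comm

lemma mul_sum_right {ι : Type*} (F : Finset ι) (g : ι → ℕ → A) (x : ℕ → A) (m : ℕ) :
    D.mul x (fun t => ∑ s ∈ F, g s t) m = ∑ s ∈ F, D.mul x (g s) m := by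
  simp only [mul_apply, map_sum]
  trans ∑ p ∈ antidiagonal m, ∑ s ∈ F, ∑ q ∈ antidiagonal p.2, D.C p.1 (x q.1) (g s q.2)
  · exact Finset.sum_congr rfl fun p _ => Finset.sum_comm
  · exact Finset.sum_comm

lemma matMul_assoc (X Y Z : ℕ → Matrix (Fin n) (Fin n) A) :
    D.matMul n (D.matMul n X Y) Z = D.matMul n X (D.matMul n Y Z) := by
  funext m
  ext i j
  rw [matMul_entry, matMul_entry]
  simp only [matMul_entry]
  simp only [mul_sum_left, mul_sum_right]
  rw [Finset.sum_comm]
  refine Finset.sum_congr rfl fun s _ => Finset.sum_congr rfl fun t _ => ?_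
  exact congrFun (D.assoc _ _ _) m

lemma matMul_right_lt (X Z : ℕ → Matrix (Fin n) (Fin n) A) (N m : ℕ)
    (hZ : ∀ j, j < N → Z j = 0) (hm : m < N) : D.matMul n X Z m = 0 := by
  rw [matMul_apply]
  refine Finset.sum_eq_zero fun p hp => Finset.sum_eq_zero fun q hq => ?_
  rw [Finset.HasAntidiagonal.mem_antidiagonal] at hp hq
  rw [hZ q.2 (by omega), matC_zero_right]

lemma matMul_left_lt (Z Y : ℕ → Matrix (Fin n) (Fin n) A) (N m : ℕ)
    (hZ : ∀ j, j < N → Z j = 0) (hm : m < N) : D.matMul n Z Y m = 0 := by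
  rw [matMul_apply]
  refine Finset.sum_eq_zero fun p hp => Finset.sum_eq_zero fun q hq => ?_
  rw [Finset.HasAntidiagonal.mem_antidiagonal] at hp hq
  rw [hZ q.1 (by omega), matC_zero_left]

lemma matMul_right_coeff (X Z : ℕ → Matrix (Fin n) (Fin n) A) (N : ℕ)
    (hZ : ∀ j, j < N → Z j = 0) : D.matMul n X Z N = X 0 * Z N := by
  rw [matMul_apply]
  rw [Finset.sum_eq_single_of_mem (0, N) (by simp)]
  · rw [Finset.sum_eq_single_of_mem ((0 : ℕ), N) (by simp)]
    · exact D.matC_zero_eq n (X 0) (Z N)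
    · intro q hq hne
      obtain ⟨q1, q2⟩ := q
      rw [Finset.HasAntidiagonal.mem_antidiagonal] at hq
      have h2 : q2 < N := by
        by_contra h
        push_neg at h
        exact hne (by simp only [Prod.mk.injEq]; omega)
      rw [hZ q2 h2, matC_zero_right]
  · intro p hp hne
    obtain ⟨p1, p2⟩ := p
    rw [Finset.HasAntidiagonal.mem_antidiagonal] at hp
    have hp2 : p2 < N := by
      by_contra h
      push_neg at h
      exact hne (by simp only [Prod.mk.injEq]; omega)
    refine Finset.sum_eq_zero fun q hq => ?_
    rw [Finset.HasAntidiagonal.mem_antidiagonal] at hq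
    rw [hZ q.2 (by omega), matC_zero_right]

lemma matMul_left_coeff (Z Y : ℕ → Matrix (Fin n) (Fin n) A) (N : ℕ)
    (hZ : ∀ j, j < N → Z j = 0) : D.matMul n Z Y N = Z N * Y 0 := by
  rw [matMul_apply]
  rw [Finset.sum_eq_single_of_mem (0, N) (by simp)]
  · rw [Finset.sum_eq_single_of_mem (N, (0 : ℕ)) (by simp)]
    · exact D.matC_zero_eq n (Z N) (Y 0)
    · intro q hq hne
      obtain ⟨q1, q2⟩ := q
      rw [Finset.HasAntidiagonal.mem_antidiagonal] at hq
      have h2 : q1 < N := by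
        by_contra h
        push_neg at h
        exact hne (by simp only [Prod.mk.injEq]; omega)
      rw [hZ q1 h2, matC_zero_left]
  · intro p hp hne
    obtain ⟨p1, p2⟩ := p
    rw [Finset.HasAntidiagonal.mem_antidiagonal] at hp
    have hp2 : p2 < N := by
      by_contra h
      push_neg at h
      exact hne (by simp only [Prod.mk.injEq]; omega)
    refine Finset.sum_eq_zero fun q hq => ?_
    rw [Finset.HasAntidiagonal.mem_antidiagonal] at hq
    rw [hZ q.1 (by omega), matC_zero_left]

lemma sandwich_coeff (P Q Z : ℕ → Matrix (Fin n) (Fin n) A) (N : ℕ)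
    (hZ : ∀ j, j < N → Z j = 0) :
    D.matMul n (D.matMul n P Z) Q N = P 0 * Z N * Q 0 := by
  have h1 : ∀ j, j < N → D.matMul n P Z j = 0 :=
    fun j hj => D.matMul_right_lt n P Z N j hZ hj
  rw [D.matMul_left_coeff n _ Q N h1, D.matMul_right_coeff n P Z N hZ]

lemma eq_zero_of_corner (P Q X : ℕ → Matrix (Fin n) (Fin n) A)
    (hc : ∀ N, P 0 * X N * Q 0 = X N)
    (hker : D.matMul n (D.matMul n P X) Q = 0) : X = 0 := by
  have key : ∀ N, X N = 0 := by
    intro N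
    induction N using Nat.strong_induction_on with
    | _ N ih =>
      have hs := D.sandwich_coeff n P Q X N ih
      rw [hker, hc N] at hs
      simpa using hs.symm
  funext N
  exact key N

lemma eq_zero_of_stable (P Q X : ℕ → Matrix (Fin n) (Fin n) A)
    (hstab : D.matMul n (D.matMul n P X) Q = X)
    (hc : ∀ N, P 0 * X N * Q 0 = 0) : X = 0 := by
  have key : ∀ N, X N = 0 := by
    intro N
    induction N using Nat.strong_induction_on with
    | _ N ih =>
      have hs := D.sandwich_coeff n P Q X N ih
      rw [hstab, hc N] at hs
      exact hs
  funext N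
  exact key N

lemma sandwich_stable (P Q : ℕ → Matrix (Fin n) (Fin n) A)
    (hP : D.matMul n P P = P) (hQ : D.matMul n Q Q = Q)
    (L : ℕ → Matrix (Fin n) (Fin n) A) :
    D.matMul n (D.matMul n P (D.matMul n (D.matMul n P L) Q)) Q =
      D.matMul n (D.matMul n P L) Q := by
  have h1 : D.matMul n P (D.matMul n (D.matMul n P L) Q) = D.matMul n (D.matMul n P L) Q := by
    rw [← D.matMul_assoc n P (D.matMul n P L) Q, ← D.matMul_assoc n P P L, hP]
  rw [h1, D.matMul_assoc n (D.matMul n P L) Q Q, hQ]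

end MatLemmas2

end FormalDeformation



/-- Lemma 2.4, "ILem". For idempotents `P₀, Q₀ ∈ Mₙ(A)` and
⋆-idempotents `P, Q` deforming them, the map `I(B) = P ⋆ B ⋆ Q` is a
`k[[λ]]`-module isomorphism from `(P₀ Mₙ(A) Q₀)[[λ]]` onto `P ⋆ Mₙ(qA) ⋆ Q`. -/
theorem corner_module_isomorphism {k A : Type*} [CommRing k] [Ring A] [Algebra k A]
    (D : FormalDeformation k A) (n : ℕ)
    (P₀ Q₀ : Matrix (Fin n) (Fin n) A)
    (hP₀ : P₀ * P₀ = P₀) (hQ₀ : Q₀ * Q₀ = Q₀)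
    (P Q : ℕ → Matrix (Fin n) (Fin n) A)
    (hP : D.matMul n P P = P) (hQ : D.matMul n Q Q = Q)
    (hP0 : P 0 = P₀) (hQ0 : Q 0 = Q₀) :
    -- `I` is additive
    (∀ B B' : ℕ → Matrix (Fin n) (Fin n) A,
      D.matMul n (D.matMul n P (B + B')) Q =
        D.matMul n (D.matMul n P B) Q + D.matMul n (D.matMul n P B') Q) ∧
    -- `I` is `k[[λ]]`-linear
    (∀ (c : ℕ → k) (B : ℕ → Matrix (Fin n) (Fin n) A),
      D.matMul n (D.matMul n P (fdSmul c B)) Q =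
        fdSmul c (D.matMul n (D.matMul n P B) Q)) ∧
    -- `I` is injective on series with coefficients in the corner `P₀ Mₙ(A) Q₀`
    (∀ B B' : ℕ → Matrix (Fin n) (Fin n) A,
      (∀ m, P₀ * B m * Q₀ = B m) → (∀ m, P₀ * B' m * Q₀ = B' m) →
      D.matMul n (D.matMul n P B) Q = D.matMul n (D.matMul n P B') Q → B = B') ∧
    -- `I` maps the corner series onto `P ⋆ Mₙ(qA) ⋆ Q`
    (∀ L : ℕ → Matrix (Fin n) (Fin n) A,
      ∃ B : ℕ → Matrix (Fin n) (Fin n) A, (∀ m, P₀ * B m * Q₀ = B m) ∧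
        D.matMul n (D.matMul n P B) Q = D.matMul n (D.matMul n P L) Q) := by
  refine ⟨fun B B' => ?_, fun c B => ?_, fun B B' hB hB' h => ?_, fun L => ?_⟩
  · rw [D.matMul_add_right, D.matMul_add_left]
  · rw [D.matMul_smul_right, D.matMul_smul_left]
  · -- injectivity
    have hc : ∀ m, P 0 * (B - B') m * Q 0 = (B - B') m := by
      intro m
      rw [hP0, hQ0]
      simp only [Pi.sub_apply, Matrix.mul_sub, Matrix.sub_mul, hB m, hB' m]
    have hker : D.matMul n (D.matMul n P (B - B')) Q = 0 := by
      rw [D.matMul_sub_right, D.matMul_sub_left, h, sub_self]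
    exact sub_eq_zero.mp (D.eq_zero_of_corner n P Q (B - B') hc hker)
  · -- surjectivity
    set G : (ℕ → Matrix (Fin n) (Fin n) A) → ℕ → Matrix (Fin n) (Fin n) A :=
      fun X N =>
        P₀ * (D.matMul n (D.matMul n P L) Q N) * Q₀
          - P₀ * (D.matMul n (D.matMul n P X) Q N) * Q₀ + P₀ * X N * Q₀ with hGdef
    have hG : ∀ X Y N, (∀ j, j < N → X j = Y j) → G X N = G Y N := by
      intro X Y N hag
      have hZ : ∀ j, j < N → (X - Y) j = 0 := by
        intro j hj
        simp [Pi.sub_apply, hag j hj]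
      have hs := D.sandwich_coeff n P Q (X - Y) N hZ
      rw [D.matMul_sub_right, D.matMul_sub_left, hP0, hQ0] at hs
      simp only [Pi.sub_apply] at hs
      -- hs : PXQ N - PYQ N = P₀ * (X N - Y N) * Q₀
      have e2 : P₀ * (D.matMul n (D.matMul n P X) Q N) * Q₀
          - P₀ * (D.matMul n (D.matMul n P Y) Q N) * Q₀
          = P₀ * X N * Q₀ - P₀ * Y N * Q₀ := by
        rw [← Matrix.sub_mul, ← Matrix.mul_sub, hs, corner_idem hP₀ hQ₀,
          Matrix.mul_sub, Matrix.sub_mul]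
      simp only [hGdef]
      have e3 : P₀ * (D.matMul n (D.matMul n P X) Q N) * Q₀ - P₀ * X N * Q₀
          = P₀ * (D.matMul n (D.matMul n P Y) Q N) * Q₀ - P₀ * Y N * Q₀ :=
        sub_eq_sub_iff_sub_eq_sub.mp e2
      calc P₀ * (D.matMul n (D.matMul n P L) Q N) * Q₀
            - P₀ * (D.matMul n (D.matMul n P X) Q N) * Q₀ + P₀ * X N * Q₀
          = P₀ * (D.matMul n (D.matMul n P L) Q N) * Q₀
            - (P₀ * (D.matMul n (D.matMul n P X) Q N) * Q₀ - P₀ * X N * Q₀) := by abel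
        _ = P₀ * (D.matMul n (D.matMul n P L) Q N) * Q₀
            - (P₀ * (D.matMul n (D.matMul n P Y) Q N) * Q₀ - P₀ * Y N * Q₀) := by rw [e3]
        _ = P₀ * (D.matMul n (D.matMul n P L) Q N) * Q₀
            - P₀ * (D.matMul n (D.matMul n P Y) Q N) * Q₀ + P₀ * Y N * Q₀ := by abel
    have hfix : ∀ N, seqFix G N = G (seqFix G) N := fun N => seqFix_spec G hG N
    have hBc : ∀ m, P₀ * seqFix G m * Q₀ = seqFix G m := by
      intro m
      conv_rhs => rw [hfix m]
      conv_lhs => rw [hfix m]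
      simp only [hGdef]
      simp only [Matrix.mul_sub, Matrix.mul_add, Matrix.sub_mul, Matrix.add_mul,
        corner_idem hP₀ hQ₀]
    have hcornerEq : ∀ N, P₀ * (D.matMul n (D.matMul n P (seqFix G)) Q N) * Q₀
        = P₀ * (D.matMul n (D.matMul n P L) Q N) * Q₀ := by
      intro N
      have h1 := hfix N
      simp only [hGdef] at h1
      rw [hBc N] at h1
      have h2 : P₀ * (D.matMul n (D.matMul n P L) Q N) * Q₀
          - P₀ * (D.matMul n (D.matMul n P (seqFix G)) Q N) * Q₀ + seqFix G N
          = 0 + seqFix G N := by rw [zero_add, ← h1]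
      have h3 := add_right_cancel h2
      exact (sub_eq_zero.mp h3).symm
    refine ⟨seqFix G, hBc, ?_⟩
    have hstabB := D.sandwich_stable n P Q hP hQ (seqFix G)
    have hstabM := D.sandwich_stable n P Q hP hQ L
    have hdiff : D.matMul n (D.matMul n P (seqFix G)) Q
        - D.matMul n (D.matMul n P L) Q = 0 := by
      apply D.eq_zero_of_stable n P Q
      · rw [D.matMul_sub_right, D.matMul_sub_left, hstabB, hstabM]
      · intro N
        rw [hP0, hQ0, Pi.sub_apply, Matrix.mul_sub, Matrix.sub_mul, hcornerEq N, sub_self]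
    exact sub_eq_zero.mp hdiff
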